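/- arXiv:2403.16688 — 5 statements merged into one kernel-verified Lean document; each statement's English description precedes it below -/
import Mathlib

section
/- Let $p_0$ be an absolutely continuous probability density on $\mathbb{R}$ with finite Fisher information for location $i(p_0) = \int_{\{p_0>0\}}(p_0')^2/p_0 < \infty$. Then $p_0$ is bounded and $i(p_0) \geq 4\,\|p_0\|_\infty^2$, where $\|p_0\|_\infty = \sup_{z\in\mathbb{R}} p_0(z)$. -/
open MeasureTheory

private lemma sqrt_mul_le_half {a b : ℝ} (ha : 0 ≤ a) (hb : 0 ≤ b) :
    Real.sqrt (a * b) ≤ (a + b) / 2 := by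
  nlinarith [Real.sq_sqrt (mul_nonneg ha hb), Real.sqrt_nonneg (a * b), sq_nonneg (a - b),
    sq_nonneg (a + b - 2 * Real.sqrt (a * b))]

/-- If `p0` is an absolutely continuous probability density on `ℝ` with finite Fisher
information for location `i(p0) = ∫_{p0>0} (p0')²/p0`, then `p0` is bounded and
`i(p0) ≥ 4 ‖p0‖_∞²`. -/
theorem stmt1
    (p0 p0' : ℝ → ℝ)
    (hp0_nonneg : ∀ z, 0 ≤ p0 z)
    (hp0_dens : ∫ z, p0 z = 1)
    (hp0_ac : ∀ x y : ℝ, x ≤ y → p0 y - p0 x = ∫ z in x..y, p0' z)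
    (hfisher_int : Integrable (fun z => if 0 < p0 z then (p0' z) ^ 2 / p0 z else 0)) :
    BddAbove (Set.range p0) ∧
      4 * (⨆ z : ℝ, p0 z) ^ 2 ≤ ∫ z, (if 0 < p0 z then (p0' z) ^ 2 / p0 z else 0) := by
  set φ : ℝ → ℝ := fun z => if 0 < p0 z then (p0' z) ^ 2 / p0 z else 0 with hφ
  have hφnn : ∀ z, 0 ≤ φ z := by
    intro z; rw [hφ]; dsimp only
    split
    · positivity
    · exact le_refl 0
  have hp0int : Integrable p0 := by
    by_contra h
    rw [integral_undef h] at hp0_dens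
    norm_num at hp0_dens
  set g : ℝ → ℝ := fun z => Real.sqrt (φ z * p0 z) with hg
  have hgmeas : AEStronglyMeasurable g volume :=
    (Real.continuous_sqrt.measurable.comp_aemeasurable
      (hfisher_int.aemeasurable.mul hp0int.aemeasurable)).aestronglyMeasurable
  have hgint : Integrable g := by
    refine ((hfisher_int.add hp0int).div_const 2).mono' hgmeas ?_
    refine Filter.Eventually.of_forall fun z => ?_
    have := sqrt_mul_le_half (hφnn z) (hp0_nonneg z)
    rw [Real.norm_eq_abs, abs_of_nonneg (Real.sqrt_nonneg _)]
    simpa using this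
  have hgnn : ∀ z, 0 ≤ g z := fun z => Real.sqrt_nonneg _
  -- KEY LEMMA
  have key : ∀ x y : ℝ, x ≤ y → |p0 y - p0 x| ≤ ∫ z in Set.Ioc x y, g z := by
    intro x y hxy
    have hgsetnn : 0 ≤ ∫ z in Set.Ioc x y, g z :=
      setIntegral_nonneg measurableSet_Ioc fun z _ => hgnn z
    by_cases hI : IntervalIntegrable p0' volume x y
    swap
    · rw [hp0_ac x y hxy, intervalIntegral.integral_undef hI, abs_zero]
      exact hgsetnn
    have hIoc : IntegrableOn p0' (Set.Ioc x y) :=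
      (intervalIntegrable_iff_integrableOn_Ioc_of_le hxy).mp hI
    set f : ℝ → ℝ := (Set.Ioc x y).indicator p0' with hf
    have hfint : Integrable f := (integrable_indicator_iff measurableSet_Ioc).2 hIoc
    have hFTC : ∀ a b : ℝ, a ≤ b → x ≤ a → b ≤ y →
        ∫ z in Set.Ioc a b, f z = p0 b - p0 a := by
      intro a b hab hxa hby
      have hsub : Set.Ioc a b ⊆ Set.Ioc x y := Set.Ioc_subset_Ioc hxa hby
      have h1 : ∫ z in Set.Ioc a b, f z = ∫ z in Set.Ioc a b, p0' z :=
        setIntegral_congr_fun measurableSet_Ioc fun z hz => Set.indicator_of_mem (hsub hz) _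
      rw [h1, ← intervalIntegral.integral_of_le hab, ← hp0_ac a b hab]
    have hzero : ∀ᵐ z : ℝ, z ∈ Set.Ioo x y → p0 z = 0 → p0' z = 0 := by
      have hLeb := IsUnifLocDoublingMeasure.ae_tendsto_average
        (μ := (volume : Measure ℝ)) hfint.locallyIntegrable 1
      filter_upwards [hLeb] with z hz hzmem hp0z
      have hfz : f z = p0' z := Set.indicator_of_mem (Set.Ioo_subset_Ioc_self hzmem) _
      have hmemleft : ∀ᶠ r in nhdsWithin (0:ℝ) (Set.Ioi 0),
          z ∈ Metric.closedBall (z - r) ((1:ℝ) * r) := by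
        filter_upwards [self_mem_nhdsWithin] with r hr
        simp only [Metric.mem_closedBall, Real.dist_eq, one_mul]
        rw [sub_sub_cancel, abs_of_pos hr]
      have hmemright : ∀ᶠ r in nhdsWithin (0:ℝ) (Set.Ioi 0),
          z ∈ Metric.closedBall (z + r) ((1:ℝ) * r) := by
        filter_upwards [self_mem_nhdsWithin] with r hr
        simp only [Metric.mem_closedBall, Real.dist_eq, one_mul]
        rw [sub_add_cancel_left, abs_neg, abs_of_pos hr]
      have hTleft := hz (fun r => z - r) id Filter.tendsto_id hmemleft
      have hTright := hz (fun r => z + r) id Filter.tendsto_id hmemright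
      have hballl : ∀ r : ℝ, Metric.closedBall (z - r) r = Set.Icc (z - 2*r) z := by
        intro r; rw [Real.closedBall_eq_Icc]; congr 1 <;> ring
      have hballr : ∀ r : ℝ, Metric.closedBall (z + r) r = Set.Icc z (z + 2*r) := by
        intro r; rw [Real.closedBall_eq_Icc]; congr 1 <;> ring
      have hle : f z ≤ 0 := by
        refine le_of_tendsto hTleft ?_
        have hpos : (0:ℝ) < (z - x)/2 := by
          have := hzmem.1; linarith
        filter_upwards [Ioo_mem_nhdsGT_of_mem (Set.left_mem_Ico.2 hpos)] with r hr
        have hr0 : 0 < r := hr.1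
        have hxa : x ≤ z - 2*r := by have := hr.2; linarith
        have hint : ∫ w in Set.Icc (z - 2*r) z, f w = p0 z - p0 (z - 2*r) := by
          rw [integral_Icc_eq_integral_Ioc]
          exact hFTC _ _ (by linarith) hxa hzmem.2.le
        simp only [id_eq]
        rw [setAverage_eq, hballl r, hint, hp0z, smul_eq_mul]
        have : (0:ℝ) - p0 (z - 2*r) ≤ 0 := by linarith [hp0_nonneg (z - 2*r)]
        have hinv : (0:ℝ) ≤ ((volume (Set.Icc (z - 2*r) z)).toReal)⁻¹ := by positivity
        exact mul_nonpos_of_nonneg_of_nonpos hinv this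
      have hge : 0 ≤ f z := by
        refine ge_of_tendsto hTright ?_
        have hpos : (0:ℝ) < (y - z)/2 := by
          have := hzmem.2; linarith
        filter_upwards [Ioo_mem_nhdsGT_of_mem (Set.left_mem_Ico.2 hpos)] with r hr
        have hr0 : 0 < r := hr.1
        have hby : z + 2*r ≤ y := by have := hr.2; linarith
        have hint : ∫ w in Set.Icc z (z + 2*r), f w = p0 (z + 2*r) - p0 z := by
          rw [integral_Icc_eq_integral_Ioc]
          exact hFTC _ _ (by linarith) hzmem.1.le hby
        simp only [id_eq]
        rw [setAverage_eq, hballr r, hint, hp0z, smul_eq_mul]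
        have h2 : (0:ℝ) ≤ p0 (z + 2*r) - 0 := by linarith [hp0_nonneg (z + 2*r)]
        have hinv : (0:ℝ) ≤ ((volume (Set.Icc z (z + 2*r))).toReal)⁻¹ := by positivity
        exact mul_nonneg hinv h2
      rw [← hfz]
      exact le_antisymm hle hge
    have h1 : p0 y - p0 x = ∫ z in Set.Ioc x y, p0' z := by
      rw [hp0_ac x y hxy, intervalIntegral.integral_of_le hxy]
    have hy' : ∀ᵐ z : ℝ, z ≠ y := by
      have : (volume : Measure ℝ) {y} = 0 := Real.volume_singleton
      simpa [ae_iff] using this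
    have haebound : ∀ᵐ z ∂(volume.restrict (Set.Ioc x y)), |p0' z| ≤ g z := by
      refine (ae_restrict_iff' measurableSet_Ioc).2 ?_
      filter_upwards [hzero, hy'] with z hz hzy hzmem
      rcases (hp0_nonneg z).lt_or_eq with hpos | heq
      · have : φ z * p0 z = (p0' z) ^ 2 := by
          rw [hφ]; dsimp only; rw [if_pos hpos, div_mul_cancel₀]
          exact ne_of_gt hpos
        rw [hg]; dsimp only; rw [this, Real.sqrt_sq_eq_abs]
      · have hzIoo : z ∈ Set.Ioo x y := ⟨hzmem.1, lt_of_le_of_ne hzmem.2 hzy⟩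
        rw [hz hzIoo heq.symm, abs_zero]
        exact hgnn z
    rw [h1]
    calc |∫ z in Set.Ioc x y, p0' z| ≤ ∫ z in Set.Ioc x y, |p0' z| := by
          simpa [Real.norm_eq_abs] using
            norm_integral_le_integral_norm (μ := volume.restrict (Set.Ioc x y)) p0'
      _ ≤ ∫ z in Set.Ioc x y, g z :=
          integral_mono_ae hIoc.abs hgint.integrableOn haebound
  -- existence of small values to the left and right
  have hsmall : ∀ (s : Set ℝ), MeasurableSet s → volume s = ⊤ → ∀ ε : ℝ, 0 < ε →
      ∃ a ∈ s, p0 a < ε := by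
    intro s hs hsvol ε hε
    by_contra h
    push_neg at h
    have hconst : Integrable (fun _ : ℝ => ε) (volume.restrict s) := by
      refine (hp0int.restrict (s := s)).mono' aestronglyMeasurable_const ?_
      refine (ae_restrict_iff' hs).2 (Filter.Eventually.of_forall fun a ha => ?_)
      rw [Real.norm_eq_abs, abs_of_pos hε]
      exact h a ha
    rw [integrable_const_iff] at hconst
    rcases hconst with h' | h'
    · exact absurd h' (ne_of_gt hε)
    · rw [isFiniteMeasure_restrict, hsvol] at h'
      exact absurd h' (by simp)
  have hbound : ∀ x : ℝ, 2 * p0 x ≤ ∫ z, g z := by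
    intro x
    have : ∀ ε : ℝ, 0 < ε → 2 * p0 x ≤ (∫ z, g z) + ε := by
      intro ε hε
      obtain ⟨a, ha, hpa⟩ := hsmall (Set.Iic x) measurableSet_Iic Real.volume_Iic (ε/2) (by linarith)
      obtain ⟨b, hb, hpb⟩ := hsmall (Set.Ici x) measurableSet_Ici Real.volume_Ici (ε/2) (by linarith)
      have hax : a ≤ x := ha
      have hxb : x ≤ b := hb
      have k1 := (le_abs_self (p0 x - p0 a)).trans (key a x hax)
      have k2' : p0 x - p0 b ≤ ∫ z in Set.Ioc x b, g z := by
        calc p0 x - p0 b ≤ |p0 b - p0 x| := (abs_sub_comm (p0 x) (p0 b)) ▸ le_abs_self _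
          _ ≤ _ := key x b hxb
      have hsum : (∫ z in Set.Ioc a x, g z) + ∫ z in Set.Ioc x b, g z
          = ∫ z in Set.Ioc a b, g z := by
        rw [← setIntegral_union (Set.Ioc_disjoint_Ioc_of_le le_rfl) measurableSet_Ioc
          hgint.integrableOn hgint.integrableOn, Set.Ioc_union_Ioc_eq_Ioc hax hxb]
      have hle : ∫ z in Set.Ioc a b, g z ≤ ∫ z, g z :=
        setIntegral_le_integral hgint (Filter.Eventually.of_forall hgnn)
      linarith [hp0_nonneg a, hp0_nonneg b]
    by_contra hcon
    push_neg at hcon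
    have := this ((2 * p0 x - ∫ z, g z)/2) (by linarith)
    linarith
  -- assemble
  have hM : ∀ x, p0 x ≤ (∫ z, g z) / 2 := fun x => by linarith [hbound x]
  have hbdd : BddAbove (Set.range p0) := ⟨(∫ z, g z) / 2, by
    rintro _ ⟨x, rfl⟩; exact hM x⟩
  refine ⟨hbdd, ?_⟩
  have hS : (⨆ z : ℝ, p0 z) ≤ (∫ z, g z) / 2 := ciSup_le hM
  have hS0 : 0 ≤ ⨆ z : ℝ, p0 z := (hp0_nonneg 0).trans (le_ciSup hbdd 0)
  have hc0 : 0 ≤ ∫ z, g z := integral_nonneg hgnn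
  have hI0 : 0 ≤ ∫ z, φ z := integral_nonneg hφnn
  have hcI : (∫ z, g z) ^ 2 ≤ ∫ z, φ z := by
    rcases eq_or_lt_of_le hc0 with h | h
    · rw [← h]; simpa using hI0
    · have hptw : ∀ z, g z ≤ ((1/(∫ z, g z)) * φ z + (∫ z, g z) * p0 z) / 2 := by
        intro z
        have h1 : (0:ℝ) ≤ (1/(∫ z, g z)) * φ z :=
          mul_nonneg (by positivity) (hφnn z)
        have h2 : (0:ℝ) ≤ (∫ z, g z) * p0 z := mul_nonneg hc0 (hp0_nonneg z)
        have hsq := sqrt_mul_le_half h1 h2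
        have heq : (1/(∫ z, g z)) * φ z * ((∫ z, g z) * p0 z) = φ z * p0 z := by
          field_simp
        rw [heq] at hsq
        exact hsq
      have hR : Integrable (fun z => ((1/(∫ z, g z)) * φ z + (∫ z, g z) * p0 z) / 2) :=
        ((hfisher_int.const_mul _).add (hp0int.const_mul _)).div_const 2
      have hint := integral_mono hgint hR hptw
      rw [integral_div, integral_add (hfisher_int.const_mul _) (hp0int.const_mul _),
        integral_const_mul, integral_const_mul, hp0_dens] at hint
      have h3 : (∫ z, g z) ≤ (∫ z, φ z) / (∫ z, g z) := by
        rw [one_div, inv_mul_eq_div] at hint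
        linarith
      have h4 := (le_div_iff₀ h).1 h3
      nlinarith [h4]
  nlinarith [hS, hS0, hc0, hcI]
end

section
/- For $\rho \in (0,1)$, $\mu_1, \mu_2 \in \mathbb{R}$ and $\sigma > 0$, the two-component Gaussian mixture density $p_0(z) = \frac{1-\rho}{\sqrt{2\pi}\sigma} e^{-(z-\mu_1)^2/(2\sigma^2)} + \frac{\rho}{\sqrt{2\pi}\sigma} e^{-(z-\mu_2)^2/(2\sigma^2)}$ is log-concave on $\mathbb{R}$ if and only if $|\mu_1 - \mu_2| \leq 2\sigma$. -/
open Real Set Filter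

private lemma antitone_hasDerivAt_nonpos {g : ℝ → ℝ} {g' x : ℝ}
    (hg : Antitone g) (h : HasDerivAt g g' x) : g' ≤ 0 := by
  have h1 : Tendsto (slope g x) (nhdsWithin x (Set.Ioi x)) (nhds g') :=
    (hasDerivAt_iff_tendsto_slope.mp h).mono_left
      (nhdsWithin_mono x fun y hy => ne_of_gt hy)
  refine le_of_tendsto h1 ?_
  filter_upwards [self_mem_nhdsWithin] with y hy
  have h2 : g y ≤ g x := hg (le_of_lt hy)
  have h3 : 0 < y - x := sub_pos.mpr hy
  have : slope g x y = (g y - g x) / (y - x) := by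
    simp [slope_def_field]
  rw [this]
  exact div_nonpos_of_nonpos_of_nonneg (by linarith) h3.le

private noncomputable def W (A m s z : ℝ) : ℝ := A * Real.exp (-(z - m) ^ 2 / (2 * s ^ 2))

private lemma W_pos {A s : ℝ} (m z : ℝ) (hA : 0 < A) : 0 < W A m s z := by
  unfold W; positivity

private lemma hasDerivAt_W (A m : ℝ) {s : ℝ} (hs : s ≠ 0) (z : ℝ) :
    HasDerivAt (fun z => W A m s z) (W A m s z * ((m - z) / s ^ 2)) z := by
  have h1 : HasDerivAt (fun z : ℝ => -(z - m) ^ 2 / (2 * s ^ 2))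
      ((m - z) / s ^ 2) z := by
    have h2 : HasDerivAt (fun z : ℝ => z - m) 1 z := (hasDerivAt_id z).sub_const m
    have h3 := ((h2.pow 2).neg).div_const (2 * s ^ 2)
    refine h3.congr_deriv ?_
    field_simp
    ring
  have := ((h1.exp).const_mul A)
  refine this.congr_deriv ?_
  unfold W; ring

/-- first derivative of the log-mixture -/
private noncomputable def D1 (A B m1 m2 s z : ℝ) : ℝ :=
  (W A m1 s z * ((m1 - z) / s ^ 2) + W B m2 s z * ((m2 - z) / s ^ 2))
    / (W A m1 s z + W B m2 s z)

/-- second derivative of the log-mixture -/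
private noncomputable def D2 (A B m1 m2 s z : ℝ) : ℝ :=
  (W A m1 s z * W B m2 s z * (m1 - m2) ^ 2 / s ^ 4
      - (W A m1 s z + W B m2 s z) ^ 2 / s ^ 2)
    / (W A m1 s z + W B m2 s z) ^ 2

private lemma hasDerivAt_logmix {A B s : ℝ} (m1 m2 : ℝ) (hA : 0 < A) (hB : 0 < B)
    (hs : 0 < s) (z : ℝ) :
    HasDerivAt (fun z => Real.log (W A m1 s z + W B m2 s z)) (D1 A B m1 m2 s z) z := by
  have hp : HasDerivAt (fun z => W A m1 s z + W B m2 s z)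
      (W A m1 s z * ((m1 - z) / s ^ 2) + W B m2 s z * ((m2 - z) / s ^ 2)) z :=
    (hasDerivAt_W A m1 hs.ne' z).add (hasDerivAt_W B m2 hs.ne' z)
  have hpos : 0 < W A m1 s z + W B m2 s z :=
    add_pos (W_pos m1 z hA) (W_pos m2 z hB)
  exact hp.log hpos.ne'

private lemma hasDerivAt_D1 {A B s : ℝ} (m1 m2 : ℝ) (hA : 0 < A) (hB : 0 < B)
    (hs : 0 < s) (z : ℝ) :
    HasDerivAt (fun z => D1 A B m1 m2 s z) (D2 A B m1 m2 s z) z := by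
  have hs2 : (s : ℝ) ^ 2 ≠ 0 := by positivity
  have ha : HasDerivAt (fun z : ℝ => (m1 - z) / s ^ 2) (-1 / s ^ 2) z := by
    have := ((hasDerivAt_id z).const_sub m1).div_const (s ^ 2)
    simpa using this
  have hb : HasDerivAt (fun z : ℝ => (m2 - z) / s ^ 2) (-1 / s ^ 2) z := by
    have := ((hasDerivAt_id z).const_sub m2).div_const (s ^ 2)
    simpa using this
  have hN : HasDerivAt (fun z => W A m1 s z * ((m1 - z) / s ^ 2)
        + W B m2 s z * ((m2 - z) / s ^ 2))
      ((W A m1 s z * ((m1 - z) / s ^ 2)) * ((m1 - z) / s ^ 2) + W A m1 s z * (-1 / s ^ 2)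
        + ((W B m2 s z * ((m2 - z) / s ^ 2)) * ((m2 - z) / s ^ 2) + W B m2 s z * (-1 / s ^ 2)))
      z :=
    (((hasDerivAt_W A m1 hs.ne' z).mul ha).add ((hasDerivAt_W B m2 hs.ne' z).mul hb))
  have hp : HasDerivAt (fun z => W A m1 s z + W B m2 s z)
      (W A m1 s z * ((m1 - z) / s ^ 2) + W B m2 s z * ((m2 - z) / s ^ 2)) z :=
    (hasDerivAt_W A m1 hs.ne' z).add (hasDerivAt_W B m2 hs.ne' z)
  have hpos : 0 < W A m1 s z + W B m2 s z :=
    add_pos (W_pos m1 z hA) (W_pos m2 z hB)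
  have hd := hN.div hp hpos.ne'
  refine hd.congr_deriv ?_
  unfold D2
  set w1 := W A m1 s z with hw1
  set w2 := W B m2 s z with hw2
  have hw1p : 0 < w1 := W_pos m1 z hA
  have hw2p : 0 < w2 := W_pos m2 z hB
  have hppos : (0:ℝ) < w1 + w2 := add_pos hw1p hw2p
  field_simp
  ring

private lemma mixture_core {A B s : ℝ} (m1 m2 : ℝ) (hA : 0 < A) (hB : 0 < B) (hs : 0 < s) :
    ConcaveOn ℝ Set.univ (fun z : ℝ =>
        Real.log (W A m1 s z + W B m2 s z)) ↔ |m1 - m2| ≤ 2 * s := by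
  constructor
  · -- concave → |m1 - m2| ≤ 2 s
    intro h
    by_cases hm : m1 = m2
    · simp [hm]; positivity
    · have hmm : m1 - m2 ≠ 0 := sub_ne_zero.mpr hm
      obtain ⟨z0, hz0⟩ : ∃ z0 : ℝ,
          z0 = (m1 + m2) / 2 + s ^ 2 * (Real.log B - Real.log A) / (m1 - m2) := ⟨_, rfl⟩
      have hs2 : (s:ℝ) ^ 2 ≠ 0 := by positivity
      have key : (z0 - m2) ^ 2 - (z0 - m1) ^ 2 = 2 * s ^ 2 * (Real.log B - Real.log A) := by
        have h1 : (z0 - m2) ^ 2 - (z0 - m1) ^ 2 = (m1 - m2) * (2 * z0 - m1 - m2) := by ring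
        rw [h1, hz0]
        field_simp
        ring
      have hww : W A m1 s z0 = W B m2 s z0 := by
        unfold W
        rw [← Real.exp_log hA, ← Real.exp_log hB, ← Real.exp_add, ← Real.exp_add]
        congr 1
        field_simp
        linear_combination key
      have hdiffall : ∀ x, HasDerivAt (fun z => Real.log (W A m1 s z + W B m2 s z))
          (D1 A B m1 m2 s x) x := hasDerivAt_logmix m1 m2 hA hB hs
      have hderiv : deriv (fun z => Real.log (W A m1 s z + W B m2 s z))
          = fun x => D1 A B m1 m2 s x := funext fun x => (hdiffall x).deriv
      have hanti : Antitone (fun x => D1 A B m1 m2 s x) := by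
        rw [← antitoneOn_univ, ← hderiv]
        exact h.antitoneOn_deriv fun x _ => (hdiffall x).differentiableAt
      have h2 : D2 A B m1 m2 s z0 ≤ 0 :=
        antitone_hasDerivAt_nonpos hanti (hasDerivAt_D1 m1 m2 hA hB hs z0)
      have hw1p : 0 < W A m1 s z0 := W_pos m1 z0 hA
      rw [abs_le]
      unfold D2 at h2
      rw [← hww] at h2
      set w := W A m1 s z0 with hw
      have hkey : (m1 - m2) ^ 2 ≤ 4 * s ^ 2 := by
        have hd : (0:ℝ) < (w + w) ^ 2 := by positivity
        have hs2p : (0:ℝ) < s ^ 2 := by positivity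
        have hs4p : (0:ℝ) < s ^ 4 := by positivity
        have hnum : w * w * (m1 - m2) ^ 2 / s ^ 4 - (w + w) ^ 2 / s ^ 2 ≤ 0 := by
          by_contra hc
          push_neg at hc
          have := div_pos hc hd
          linarith
        rw [sub_nonpos, div_le_div_iff₀ hs4p hs2p] at hnum
        nlinarith [mul_pos hw1p hw1p, mul_pos (mul_pos hw1p hw1p) hs2p]
      constructor <;> nlinarith
  · -- |m1 - m2| ≤ 2 s → concave
    intro h
    have hkey : (m1 - m2) ^ 2 ≤ 4 * s ^ 2 := by
      have := abs_nonneg (m1 - m2)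
      nlinarith [sq_abs (m1 - m2)]
    refine concaveOn_of_hasDerivWithinAt2_nonpos convex_univ ?_
      (f' := fun x => D1 A B m1 m2 s x) (f'' := fun x => D2 A B m1 m2 s x) ?_ ?_ ?_
    · exact fun x _ => ((hasDerivAt_logmix m1 m2 hA hB hs x).continuousAt).continuousWithinAt
    · exact fun x _ => (hasDerivAt_logmix m1 m2 hA hB hs x).hasDerivWithinAt
    · exact fun x _ => (hasDerivAt_D1 m1 m2 hA hB hs x).hasDerivWithinAt
    · intro x _
      unfold D2
      have hw1p : 0 < W A m1 s x := W_pos m1 x hA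
      have hw2p : 0 < W B m2 s x := W_pos m2 x hB
      set w1 := W A m1 s x
      set w2 := W B m2 s x
      apply div_nonpos_of_nonpos_of_nonneg _ (by positivity)
      have h4 : 4 * (w1 * w2) ≤ (w1 + w2) ^ 2 := by nlinarith [sq_nonneg (w1 - w2)]
      have hs4 : (0:ℝ) < s ^ 4 := by positivity
      have hs2 : (0:ℝ) < s ^ 2 := by positivity
      rw [sub_nonpos, div_le_div_iff₀ hs4 hs2]
      nlinarith [mul_pos hw1p hw2p, mul_le_mul_of_nonneg_left hkey (mul_pos hw1p hw2p).le,
        mul_le_mul_of_nonneg_right h4 hs4.le]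

/-- The two-component Gaussian mixture density
`p0(z) = (1-ρ)/(√(2π)σ) exp(-(z-μ₁)²/(2σ²)) + ρ/(√(2π)σ) exp(-(z-μ₂)²/(2σ²))`
is log-concave on `ℝ` if and only if `|μ₁ - μ₂| ≤ 2σ`. -/
theorem stmt3 (ρ μ1 μ2 σ : ℝ) (hρ : ρ ∈ Set.Ioo (0:ℝ) 1) (hσ : 0 < σ) :
    ConcaveOn ℝ Set.univ (fun z : ℝ =>
      Real.log ((1 - ρ) / (Real.sqrt (2 * Real.pi) * σ) * Real.exp (-(z - μ1) ^ 2 / (2 * σ ^ 2))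
        + ρ / (Real.sqrt (2 * Real.pi) * σ) * Real.exp (-(z - μ2) ^ 2 / (2 * σ ^ 2))))
      ↔ |μ1 - μ2| ≤ 2 * σ := by
  have hπ := Real.pi_pos
  have h1 : (0:ℝ) < 1 - ρ := by linarith [hρ.2]
  have h0 : (0:ℝ) < ρ := hρ.1
  have hA : 0 < (1 - ρ) / (Real.sqrt (2 * Real.pi) * σ) := by positivity
  have hB : 0 < ρ / (Real.sqrt (2 * Real.pi) * σ) := by positivity
  simpa only [W] using mixture_core μ1 μ2 hA hB hσ
end

section
/- Fix $\alpha > 0$ and define $J : [0,1] \to \mathbb{R}$ by $J(u) = \big(2\min(u, 1-u)\big)^{1 + 1/\alpha}$. Then the least concave majorant of $J$ on $[0,1]$ is the function $u \mapsto 2\min(u, 1-u)$. -/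
/-- For `α > 0`, the least concave majorant on `[0,1]` of
`J(u) = (2 min(u, 1-u))^(1+1/α)` is `u ↦ 2 min(u, 1-u)`: the latter is concave on `[0,1]`,
dominates `J` there, and is dominated by every concave function dominating `J`. -/
theorem stmt7 (α : ℝ) (hα : 0 < α) :
    ConcaveOn ℝ (Set.Icc 0 1) (fun u : ℝ => 2 * min u (1 - u)) ∧
    (∀ u ∈ Set.Icc (0:ℝ) 1, (2 * min u (1 - u)) ^ (1 + 1 / α) ≤ 2 * min u (1 - u)) ∧
    ∀ h : ℝ → ℝ, ConcaveOn ℝ (Set.Icc 0 1) h →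
      (∀ u ∈ Set.Icc (0:ℝ) 1, (2 * min u (1 - u)) ^ (1 + 1 / α) ≤ h u) →
      ∀ u ∈ Set.Icc (0:ℝ) 1, 2 * min u (1 - u) ≤ h u := by
  have hexp : (1:ℝ) ≤ 1 + 1 / α := by nlinarith [one_div_pos.2 hα]
  refine ⟨?_, ?_, ?_⟩
  · refine ⟨convex_Icc 0 1, ?_⟩
    intro x _ y _ a b ha hb hab
    simp only [smul_eq_mul]
    have m1 := min_le_left x (1-x); have m1' := min_le_right x (1-x)
    have m2 := min_le_left y (1-y); have m2' := min_le_right y (1-y)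
    rw [show (2:ℝ) * min (a*x+b*y) (1-(a*x+b*y)) = min (2*(a*x+b*y)) (2*(1-(a*x+b*y)))
      from mul_min_of_nonneg _ _ (by norm_num)]
    refine le_min ?_ ?_ <;> nlinarith
  · intro u hu
    set x := 2 * min u (1 - u) with hx
    have hx0 : 0 ≤ x := by
      have := hu.1; have := hu.2
      simp only [hx]; rcases le_total u (1 - u) with h | h <;> simp [min_def, h] <;> linarith
    have hx1 : x ≤ 1 := by
      simp only [hx]; rcases le_total u (1 - u) with h | h <;> simp [min_def, h] <;> linarith
    rcases eq_or_lt_of_le hx0 with h0 | h0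
    · rw [← h0, Real.zero_rpow (by positivity)]
    · calc x ^ (1 + 1/α) ≤ x ^ (1:ℝ) :=
            Real.rpow_le_rpow_of_exponent_ge h0 hx1 hexp
        _ = x := Real.rpow_one x
  · intro h hc hdom u hu
    have hne : (1:ℝ) + 1/α ≠ 0 := by positivity
    have h0 : (0:ℝ) ≤ h 0 := by
      have := hdom 0 (by norm_num)
      rw [show 2 * min (0:ℝ) (1 - 0) = 0 by norm_num, Real.zero_rpow hne] at this
      exact this
    have h1 : (0:ℝ) ≤ h 1 := by
      have := hdom 1 (by norm_num)
      rw [show 2 * min (1:ℝ) (1 - 1) = 0 by norm_num, Real.zero_rpow hne] at this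
      exact this
    have hhalf : (1:ℝ) ≤ h (1/2) := by
      have := hdom (1/2) (by norm_num)
      rw [show 2 * min (1/2:ℝ) (1 - 1/2) = 1 by norm_num, Real.one_rpow] at this
      exact this
    rcases le_total u (1/2) with hle | hge
    · have key := hc.2 (Set.mem_Icc.2 ⟨le_refl (0:ℝ), by norm_num⟩)
        (Set.mem_Icc.2 ⟨by norm_num, by norm_num⟩ : (1/2:ℝ) ∈ Set.Icc (0:ℝ) 1)
        (show (0:ℝ) ≤ 1 - 2*u by linarith) (show (0:ℝ) ≤ 2*u by linarith [hu.1])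
        (show (1 - 2*u) + 2*u = 1 by ring)
      have hmin : min u (1 - u) = u := min_eq_left (by linarith)
      rw [hmin]
      have : (1 - 2*u) • (0:ℝ) + (2*u) • (1/2:ℝ) = u := by simp; ring
      rw [this] at key
      have : (1 - 2*u) * h 0 + (2*u) * h (1/2) ≤ h u := by simpa [smul_eq_mul] using key
      nlinarith [mul_nonneg (by linarith [hu.1] : (0:ℝ) ≤ 2*u) (by linarith : (0:ℝ) ≤ h (1/2) - 1),
        mul_nonneg (by linarith : (0:ℝ) ≤ 1 - 2*u) h0]
    · have key := hc.2
        (Set.mem_Icc.2 ⟨by norm_num, by norm_num⟩ : (1/2:ℝ) ∈ Set.Icc (0:ℝ) 1)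
        (Set.mem_Icc.2 ⟨by norm_num, le_refl (1:ℝ)⟩)
        (show (0:ℝ) ≤ 2 - 2*u by linarith [hu.2]) (show (0:ℝ) ≤ 2*u - 1 by linarith)
        (show (2 - 2*u) + (2*u - 1) = 1 by ring)
      have hmin : min u (1 - u) = 1 - u := min_eq_right (by linarith)
      rw [hmin]
      have : (2 - 2*u) • (1/2:ℝ) + (2*u - 1) • (1:ℝ) = u := by simp; ring
      rw [this] at key
      have : (2 - 2*u) * h (1/2) + (2*u - 1) * h 1 ≤ h u := by simpa [smul_eq_mul] using key
      nlinarith [mul_nonneg (by linarith [hu.2] : (0:ℝ) ≤ 2 - 2*u) (by linarith : (0:ℝ) ≤ h (1/2) - 1),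
        mul_nonneg (by linarith : (0:ℝ) ≤ 2*u - 1) h1]
end

section
/- Let $F : [0,1] \to \mathbb{R}$ have least concave majorant $\hat F$ on $[0,1]$. Suppose $v \in (0,1)$ is such that $F$ is continuous at $v$ and $F(v) < \hat F(v) < \infty$. Then there exists $\delta \in (0, \min(v, 1-v))$ such that $\hat F$ is affine on $[v - \delta, v + \delta]$. -/
private lemma chord_aux {f : ℝ → ℝ} {s : Set ℝ} (hf : ConcaveOn ℝ s f) {x y u : ℝ}
    (hx : x ∈ s) (hy : y ∈ s) (hxy : x < y) (h1 : x ≤ u) (h2 : u ≤ y) :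
    (y - u) * f x + (u - x) * f y ≤ (y - x) * f u := by
  have hd : (0:ℝ) < y - x := by linarith
  have hsum : (y-u)/(y-x) + (u-x)/(y-x) = 1 := by
    rw [← add_div]
    rw [show y - u + (u - x) = y - x by ring, div_self hd.ne']
  have key := hf.2 hx hy (div_nonneg (by linarith : (0:ℝ) ≤ y - u) hd.le)
    (div_nonneg (by linarith : (0:ℝ) ≤ u - x) hd.le) hsum
  have hu : ((y-u)/(y-x)) • x + ((u-x)/(y-x)) • y = u := by
    simp only [smul_eq_mul]; field_simp; ring
  rw [hu] at key
  simp only [smul_eq_mul] at key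
  rw [div_mul_eq_mul_div, div_mul_eq_mul_div, ← add_div, div_le_iff₀ hd] at key
  linarith

/-- Local affineness of the least concave majorant: if `F` is continuous at `v ∈ (0,1)`
and `F v < hatF v`, then `hatF` is affine on `[v - δ, v + δ]` for some
`δ ∈ (0, min v (1-v))`. -/
theorem stmt11 (F hatF : ℝ → ℝ) (v : ℝ) (hv : v ∈ Set.Ioo (0:ℝ) 1)
    (hconc : ConcaveOn ℝ (Set.Icc 0 1) hatF)
    (hdom : ∀ u ∈ Set.Icc (0:ℝ) 1, F u ≤ hatF u)
    (hmin : ∀ h : ℝ → ℝ, ConcaveOn ℝ (Set.Icc 0 1) h →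
      (∀ u ∈ Set.Icc (0:ℝ) 1, F u ≤ h u) → ∀ u ∈ Set.Icc (0:ℝ) 1, hatF u ≤ h u)
    (hFcont : ContinuousWithinAt F (Set.Icc 0 1) v)
    (hlt : F v < hatF v) :
    ∃ δ ∈ Set.Ioo (0:ℝ) (min v (1 - v)), ∃ a b : ℝ,
      ∀ u ∈ Set.Icc (v - δ) (v + δ), hatF u = a * u + b := by
  obtain ⟨hv0, hv1⟩ := hv
  set ε := (hatF v - F v)/2 with hε
  have hεpos : 0 < ε := by simp only [hε]; linarith
  -- continuity of hatF at v
  have hint : v ∈ interior (Set.Icc (0:ℝ) 1) := by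
    rw [interior_Icc]; exact ⟨hv0, hv1⟩
  have hcA : ContinuousAt hatF v :=
    (hconc.continuousOn_interior.continuousAt (IsOpen.mem_nhds isOpen_interior hint))
  have h1 : ∀ᶠ u in nhds v, hatF v - ε < hatF u :=
    hcA.eventually (eventually_gt_nhds (by linarith))
  have h2 : ∀ᶠ u in nhdsWithin v (Set.Icc 0 1), F u < F v + ε :=
    hFcont.eventually (eventually_lt_nhds (by linarith))
  have h12 : ∀ᶠ u in nhdsWithin v (Set.Icc 0 1), hatF v - ε < hatF u ∧ F u < F v + ε :=
    (h1.filter_mono nhdsWithin_le_nhds).and h2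
  rw [Filter.eventually_iff, Metric.mem_nhdsWithin_iff] at h12
  obtain ⟨δ₀, hδ₀, hball⟩ := h12
  set δ := min (δ₀/2) (min v (1-v) / 2) with hδdef
  have hδpos : 0 < δ := by
    apply lt_min (by linarith)
    apply div_pos (lt_min hv0 (by linarith)) (by norm_num)
  have hδm : δ < min v (1 - v) := by
    have h := min_le_right (δ₀/2) (min v (1-v) / 2)
    have : 0 < min v (1-v) := lt_min hv0 (by linarith)
    calc δ ≤ min v (1-v)/2 := h
      _ < min v (1-v) := by linarith
  have hδv : δ < v := lt_of_lt_of_le hδm (min_le_left _ _)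
  have hδ1v : δ < 1 - v := lt_of_lt_of_le hδm (min_le_right _ _)
  have hδ₀' : δ < δ₀ := lt_of_le_of_lt (min_le_left _ _) (by linarith)
  set x := v - δ with hxdef
  set y := v + δ with hydef
  have hxmem : x ∈ Set.Icc (0:ℝ) 1 := ⟨by simp only [hxdef]; linarith, by simp only [hxdef]; linarith⟩
  have hymem : y ∈ Set.Icc (0:ℝ) 1 := ⟨by simp only [hydef]; linarith, by simp only [hydef]; linarith⟩
  have hxy : x < y := by simp only [hxdef, hydef]; linarith
  have hyx : y - x = 2*δ := by simp only [hxdef, hydef]; ring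
  -- bounds near v
  have hnear : ∀ u, u ∈ Set.Icc x y → u ∈ Set.Icc (0:ℝ) 1 ∧ hatF v - ε < hatF u ∧ F u < F v + ε := by
    intro u ⟨hu1, hu2⟩
    have hu1' : v - δ ≤ u := hu1
    have hu2' : u ≤ v + δ := hu2
    have humem : u ∈ Set.Icc (0:ℝ) 1 := ⟨by linarith, by linarith⟩
    have hdist : dist u v < δ₀ := by
      rw [Real.dist_eq, abs_lt]; constructor <;> linarith
    exact ⟨humem, hball ⟨Metric.mem_ball.mpr hdist, humem⟩⟩
  -- the secant line
  set a := (hatF y - hatF x)/(2*δ) with hadef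
  set b := hatF x - a * x with hbdef
  have h2δ : (0:ℝ) < 2*δ := by linarith
  have h2δ' : (2*δ:ℝ) ≠ 0 := h2δ.ne'
  have hLx : a * x + b = hatF x := by simp only [hbdef]; ring
  have hkey : ∀ u, (2*δ) * (a*u+b) = (y-u) * hatF x + (u-x) * hatF y := by
    intro u
    simp only [hbdef, hadef, hxdef, hydef]
    field_simp
    ring
  have hLy : a * y + b = hatF y := by
    have h := hkey y
    have h' : (2*δ)*(a*y+b) = (2*δ)*hatF y := by rw [h]; ring
    exact mul_left_cancel₀ h2δ' h'
  have hLconc : ConcaveOn ℝ (Set.Icc (0:ℝ) 1) (fun u => a * u + b) := by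
    refine ⟨convex_Icc 0 1, ?_⟩
    intro p _ q _ sa sb hsa hsb hsum
    simp only [smul_eq_mul]
    exact le_of_eq (by linear_combination b * hsum)
  -- for u in [x,y], L u is at least min of endpoints, hence > hatF v - ε
  have hLlow : ∀ u ∈ Set.Icc x y, hatF v - ε < a * u + b := by
    intro u ⟨hu1, hu2⟩
    have hx' := (hnear x ⟨le_refl x, hxy.le⟩).2.1
    have hy' := (hnear y ⟨hxy.le, le_refl y⟩).2.1
    rcases le_total 0 a with ha | ha
    · have : a * x + b ≤ a * u + b := by nlinarith
      linarith [hLx ▸ this]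
    · have : a * y + b ≤ a * u + b := by nlinarith
      linarith [hLy ▸ this]
  -- min of hatF and L dominates F
  have hdomL : ∀ u ∈ Set.Icc (0:ℝ) 1, F u ≤ min (hatF u) (a * u + b) := by
    intro u humem
    refine le_min (hdom u humem) ?_
    by_cases hcase : u ∈ Set.Icc x y
    · obtain ⟨_, _, hF⟩ := hnear u hcase
      have := hLlow u hcase
      have hεeq : F v + ε = hatF v - ε := by simp only [hε]; ring
      linarith
    · -- outside: hatF u ≤ L u
      have houts : (2*δ) * hatF u ≤ (y - u) * hatF x + (u - x) * hatF y := by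
        rcases lt_or_ge u x with h | h
        · have hc := chord_aux hconc humem hymem (lt_trans h hxy) h.le hxy.le
          rw [hyx] at hc
          linarith
        · have h' : y < u := by
            by_contra hle'
            push_neg at hle'
            exact hcase ⟨h, hle'⟩
          have hc := chord_aux hconc hxmem humem (lt_trans hxy h') hxy.le h'.le
          rw [hyx] at hc
          linarith
      have hLu : hatF u ≤ a * u + b := by
        have h := houts.trans_eq (hkey u).symm
        exact le_of_mul_le_mul_left h h2δ
      have hF := hdom u humem
      linarith
  have hle := hmin _ (hconc.inf hLconc) hdomL
  -- conclude
  refine ⟨δ, ⟨hδpos, hδm⟩, a, b, ?_⟩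
  intro u humem
  have humem' : u ∈ Set.Icc x y := humem
  obtain ⟨hu01, _, _⟩ := hnear u humem'
  have hub : hatF u ≤ a * u + b := le_trans (hle u hu01) (min_le_right _ _)
  have hlb : a * u + b ≤ hatF u := by
    have hc := chord_aux hconc hxmem hymem hxy humem'.1 humem'.2
    rw [hyx] at hc
    have h := (hkey u).trans_le hc
    exact le_of_mul_le_mul_left h h2δ
  linarith
end

section
/- Let $F : [0,1] \to \mathbb{R}$ and let $\hat F$ be its least concave majorant. If $F$ is differentiable at some $v \in (0,1)$ and $\hat F(v) < \infty$, then $\hat F$ is differentiable at $v$. -/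
open Set Filter Metric

lemma affine_concaveOn (m c : ℝ) : ConcaveOn ℝ (Set.Icc (0:ℝ) 1) (fun u => m * u + c) := by
  refine ⟨convex_Icc 0 1, fun x _ y _ p q hp hq hpq => ?_⟩
  simp only [smul_eq_mul]
  exact le_of_eq (by linear_combination c * hpq)

/-- Squeeze case: if `F v = G v`, `G` concave majorant of `F`, `F` has derivative `d` at `v`,
then `G` has derivative `d` at `v`. -/
lemma aux_eq_case (F G : ℝ → ℝ) {v d : ℝ} (hv : v ∈ Set.Ioo (0:ℝ) 1)
    (hconc : ConcaveOn ℝ (Set.Icc 0 1) G)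
    (hdom : ∀ u ∈ Set.Icc (0:ℝ) 1, F u ≤ G u)
    (heq : F v = G v) (hF' : HasDerivAt F d v) : HasDerivAt G d v := by
  obtain ⟨hv0, hv1⟩ := hv
  rw [hasDerivAt_iff_tendsto_slope] at hF' ⊢
  rw [Metric.tendsto_nhds] at hF' ⊢
  intro ε hε
  have h1 := hF' ε hε
  rw [Filter.eventually_iff, mem_nhdsWithin_iff] at h1
  obtain ⟨δ, hδ, hδF⟩ := h1
  set δ' : ℝ := min (δ/2) (min (v/2) ((1-v)/2)) with hδ'def
  have hδ'pos : 0 < δ' := by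
    apply lt_min (by linarith) (lt_min (by linarith) (by linarith))
  have hδ'δ : δ' < δ := lt_of_le_of_lt (min_le_left _ _) (by linarith)
  have hδ'v : δ' ≤ v/2 := le_trans (min_le_right _ _) (min_le_left _ _)
  have hδ'v1 : δ' ≤ (1-v)/2 := le_trans (min_le_right _ _) (min_le_right _ _)
  -- auxiliary points w < v < w'
  set w : ℝ := v - δ' with hw
  set w' : ℝ := v + δ' with hw'
  have hwmem : w ∈ Set.Icc (0:ℝ) 1 := ⟨by simp only [hw]; linarith, by simp only [hw]; linarith⟩
  have hw'mem : w' ∈ Set.Icc (0:ℝ) 1 := ⟨by simp only [hw']; linarith, by simp only [hw']; linarith⟩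
  have hwv : w < v := by simp only [hw]; linarith
  have hvw' : v < w' := by simp only [hw']; linarith
  have hFw : dist (slope F v w) d < ε := by
    apply hδF; constructor
    · rw [mem_ball, Real.dist_eq, hw, abs_sub_lt_iff]; constructor <;> linarith
    · simp only [mem_compl_iff, mem_singleton_iff]; intro h; rw [h] at hwv; linarith
  have hFw' : dist (slope F v w') d < ε := by
    apply hδF; constructor
    · rw [mem_ball, Real.dist_eq, hw', abs_sub_lt_iff]; constructor <;> linarith
    · simp only [mem_compl_iff, mem_singleton_iff]; intro h; rw [h] at hvw'; linarith
  rw [slope_comm F v w, Real.dist_eq, abs_sub_lt_iff] at hFw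
  rw [Real.dist_eq, abs_sub_lt_iff] at hFw'
  have hden : (0:ℝ) < v - w := by simp only [hw]; linarith
  have hden' : (0:ℝ) < w' - v := by simp only [hw']; linarith
  have hGw : slope G w v ≤ slope F w v := by
    rw [slope_def_field, slope_def_field]
    exact div_le_div_of_nonneg_right (by have := hdom w hwmem; rw [heq]; linarith) hden.le
  have hGw' : slope F v w' ≤ slope G v w' := by
    rw [slope_def_field, slope_def_field]
    exact div_le_div_of_nonneg_right (by have := hdom w' hw'mem; rw [heq]; linarith) hden'.le
  -- now the eventual bound
  rw [Filter.eventually_iff, mem_nhdsWithin_iff]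
  refine ⟨δ', hδ'pos, ?_⟩
  rintro u ⟨hub, hune⟩
  rw [mem_ball, Real.dist_eq, abs_sub_lt_iff] at hub
  have hune' : u ≠ v := by simpa using hune
  have humem : u ∈ Set.Icc (0:ℝ) 1 := ⟨by linarith, by linarith⟩
  have hFu := hδF ⟨by rw [mem_ball, Real.dist_eq, abs_sub_lt_iff]; constructor <;> linarith,
    by simpa using hune'⟩
  rw [Set.mem_setOf_eq, Real.dist_eq, abs_sub_lt_iff] at hFu
  rw [Set.mem_setOf_eq, Real.dist_eq, abs_sub_lt_iff]
  rcases lt_or_gt_of_ne hune' with hlt | hgt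
  · -- u < v
    have hdenu : (0:ℝ) < v - u := by linarith
    have hup : slope G u v ≤ slope F u v := by
      rw [slope_def_field, slope_def_field]
      exact div_le_div_of_nonneg_right (by have := hdom u humem; rw [heq]; linarith) hdenu.le
    have hlow : slope G v w' ≤ slope G u v := by
      rw [slope_def_field, slope_def_field]
      exact hconc.slope_anti_adjacent humem hw'mem hlt hvw'
    rw [slope_comm G v u, slope_comm F v u] at *
    constructor <;> linarith
  · -- v < u
    have hdenu : (0:ℝ) < u - v := by linarith
    have hlow : slope F v u ≤ slope G v u := by
      rw [slope_def_field, slope_def_field]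
      exact div_le_div_of_nonneg_right (by have := hdom u humem; rw [heq]; linarith) hdenu.le
    have hup : slope G v u ≤ slope G w v := by
      rw [slope_def_field, slope_def_field]
      exact hconc.slope_anti_adjacent hwmem humem hwv hgt
    constructor <;> linarith

set_option maxHeartbeats 2000000 in
/-- If `F` is differentiable at `v ∈ (0,1)` (within `(0,1)`), then its least concave
majorant `hatF` on `[0,1]` is also differentiable at `v`. -/
theorem stmt12 (F hatF : ℝ → ℝ) (v : ℝ) (hv : v ∈ Set.Ioo (0:ℝ) 1)
    (hconc : ConcaveOn ℝ (Set.Icc 0 1) hatF)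
    (hdom : ∀ u ∈ Set.Icc (0:ℝ) 1, F u ≤ hatF u)
    (hmin : ∀ h : ℝ → ℝ, ConcaveOn ℝ (Set.Icc 0 1) h →
      (∀ u ∈ Set.Icc (0:ℝ) 1, F u ≤ h u) → ∀ u ∈ Set.Icc (0:ℝ) 1, hatF u ≤ h u)
    (hdiff : DifferentiableWithinAt ℝ F (Set.Ioo 0 1) v) :
    DifferentiableWithinAt ℝ hatF (Set.Ioo 0 1) v := by
  obtain ⟨hv0, hv1⟩ := hv
  have hIoo : Set.Ioo (0:ℝ) 1 ∈ nhds v := Ioo_mem_nhds hv0 hv1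
  have hd : DifferentiableAt ℝ F v := hdiff.differentiableAt hIoo
  have hvmem : v ∈ Set.Icc (0:ℝ) 1 := ⟨hv0.le, hv1.le⟩
  rcases eq_or_lt_of_le (hdom v hvmem) with heq | hlt
  · exact (aux_eq_case F hatF ⟨hv0, hv1⟩ hconc hdom heq hd.hasDerivAt).differentiableAt.differentiableWithinAt
  · -- hatF is locally affine near v
    set ε : ℝ := (hatF v - F v) / 3 with hεdef
    have hε : 0 < ε := by simp only [hεdef]; linarith
    obtain ⟨δ3, hδ3, hδ3F⟩ := Metric.continuousAt_iff.1 hd.continuousAt ε hε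
    set M : ℝ := |hatF 0 - hatF v| + |hatF 1 - hatF v| + 1 with hMdef
    have hM : 0 < M := by positivity
    set s : ℝ := min (v/2) (min (ε*v/M) (δ3/2)) with hsdef
    set s' : ℝ := min ((1-v)/2) (min (ε*(1-v)/M) (δ3/2)) with hs'def
    have hs : 0 < s := lt_min (by linarith) (lt_min (div_pos (mul_pos hε hv0) hM) (by linarith))
    have hs' : 0 < s' := lt_min (by linarith) (lt_min (div_pos (mul_pos hε (by linarith)) hM) (by linarith))
    have hsv : s ≤ v/2 := min_le_left _ _
    have hsM : s ≤ ε*v/M := (min_le_right _ _).trans (min_le_left _ _)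
    have hsδ : s ≤ δ3/2 := (min_le_right _ _).trans (min_le_right _ _)
    have hs'v : s' ≤ (1-v)/2 := min_le_left _ _
    have hs'M : s' ≤ ε*(1-v)/M := (min_le_right _ _).trans (min_le_left _ _)
    have hs'δ : s' ≤ δ3/2 := (min_le_right _ _).trans (min_le_right _ _)
    set a : ℝ := v - s with hadef
    set b : ℝ := v + s' with hbdef
    have ha0 : 0 < a := by simp only [hadef]; linarith
    have hav : a < v := by simp only [hadef]; linarith
    have hvb : v < b := by simp only [hbdef]; linarith
    have hb1 : b < 1 := by simp only [hbdef]; linarith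
    have hab : a < b := hav.trans hvb
    have hamem : a ∈ Set.Icc (0:ℝ) 1 := ⟨ha0.le, by linarith⟩
    have hbmem : b ∈ Set.Icc (0:ℝ) 1 := ⟨by linarith, hb1.le⟩
    have h0mem : (0:ℝ) ∈ Set.Icc (0:ℝ) 1 := ⟨le_refl _, zero_le_one⟩
    have h1mem : (1:ℝ) ∈ Set.Icc (0:ℝ) 1 := ⟨zero_le_one, le_refl _⟩
    -- lower bounds on hatF a, hatF b by concavity
    have ha2 : hatF v - ε ≤ hatF a := by
      set t : ℝ := s / v with htdef
      have ht0 : 0 ≤ t := by positivity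
      have ht1 : 0 ≤ 1 - t := by
        have : t ≤ 1/2 := by rw [htdef, div_le_div_iff₀ hv0 two_pos]; linarith
        linarith
      have hcomb := hconc.2 h0mem hvmem ht0 ht1 (by ring)
      have hpt : t • (0:ℝ) + (1 - t) • v = a := by
        simp only [smul_eq_mul, htdef, hadef]; field_simp; ring
      rw [hpt] at hcomb
      simp only [smul_eq_mul, mul_zero, zero_add] at hcomb
      have habs : -|hatF 0 - hatF v| ≤ hatF 0 - hatF v := neg_abs_le _
      have htM : t * M ≤ ε := by
        rw [htdef, div_mul_eq_mul_div, div_le_iff₀ hv0]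
        exact (le_div_iff₀ hM).1 hsM
      have h1 : t * -|hatF 0 - hatF v| ≤ t * (hatF 0 - hatF v) :=
        mul_le_mul_of_nonneg_left habs ht0
      have h2 : t * |hatF 0 - hatF v| ≤ t * M := by
        apply mul_le_mul_of_nonneg_left ?_ ht0
        rw [hMdef]; nlinarith [abs_nonneg (hatF 1 - hatF v)]
      have h3 : t * hatF 0 + (1 - t) * hatF v = hatF v + t * (hatF 0 - hatF v) := by ring
      have h4 : t * -|hatF 0 - hatF v| = -(t * |hatF 0 - hatF v|) := by ring
      linarith
    have hb2 : hatF v - ε ≤ hatF b := by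
      set t : ℝ := s' / (1 - v) with htdef
      have h1v : (0:ℝ) < 1 - v := by linarith
      have ht0 : 0 ≤ t := by positivity
      have ht1 : 0 ≤ 1 - t := by
        have : t ≤ 1/2 := by rw [htdef, div_le_div_iff₀ h1v two_pos]; linarith
        linarith
      have hcomb := hconc.2 hvmem h1mem ht1 ht0 (by ring)
      have hpt : (1 - t) • v + t • (1:ℝ) = b := by
        simp only [smul_eq_mul, htdef, hbdef]; field_simp; ring
      rw [hpt] at hcomb
      simp only [smul_eq_mul, mul_one] at hcomb
      have habs : -|hatF 1 - hatF v| ≤ hatF 1 - hatF v := neg_abs_le _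
      have htM : t * M ≤ ε := by
        rw [htdef, div_mul_eq_mul_div, div_le_iff₀ h1v]
        exact (le_div_iff₀ hM).1 hs'M
      have h1 : t * -|hatF 1 - hatF v| ≤ t * (hatF 1 - hatF v) :=
        mul_le_mul_of_nonneg_left habs ht0
      have h2 : t * |hatF 1 - hatF v| ≤ t * M := by
        apply mul_le_mul_of_nonneg_left ?_ ht0
        rw [hMdef]; nlinarith [abs_nonneg (hatF 0 - hatF v)]
      have h3 : (1 - t) * hatF v + t * hatF 1 = hatF v + t * (hatF 1 - hatF v) := by ring
      have h4 : t * -|hatF 1 - hatF v| = -(t * |hatF 1 - hatF v|) := by ring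
      linarith
    have hFnear : ∀ u, a ≤ u → u ≤ b → F u < F v + ε := by
      intro u h1 h2
      have hd3 : dist u v < δ3 := by
        rw [Real.dist_eq, abs_sub_lt_iff]
        refine ⟨?_, ?_⟩
        · simp only [hbdef] at h2; linarith
        · simp only [hadef] at h1; linarith
      have := hδ3F hd3
      rw [Real.dist_eq, abs_sub_lt_iff] at this
      linarith
    -- the chord line
    clear_value s s' a b
    clear hsv hsM hsδ hs'v hs'M hs'δ hadef hbdef hs hs' hsdef hs'def hMdef hM
    obtain ⟨m, hmdef⟩ : ∃ m : ℝ, m = (hatF b - hatF a) / (b - a) := ⟨_, rfl⟩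
    obtain ⟨c, hcdef⟩ : ∃ c : ℝ, c = hatF a - m * a := ⟨_, rfl⟩
    have hba : (0:ℝ) < b - a := by linarith
    have hla : m * a + c = hatF a := by rw [hcdef]; ring
    have hcancel : m * (b - a) = hatF b - hatF a := by
      rw [hmdef]; exact div_mul_cancel₀ _ hba.ne'
    have hlb : m * b + c = hatF b := by
      have h5 : m * b + (hatF a - m * a) = hatF a + m * (b - a) := by ring
      rw [hcdef, h5, hcancel]; ring
    have hlconc : ConcaveOn ℝ (Set.Icc (0:ℝ) 1) (fun u => m * u + c) :=
      affine_concaveOn m c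
    -- F below the line everywhere on [0,1]
    have hFle : ∀ u ∈ Set.Icc (0:ℝ) 1, F u ≤ m * u + c := by
      intro u hu
      rcases lt_or_ge u a with hua | hua
      · -- u < a : hatF u ≤ line
        have hslope := hconc.slope_anti_adjacent hu hbmem hua hab
        have : (hatF b - hatF a) / (b - a) ≤ (hatF a - hatF u) / (a - u) :=
          hslope
        rw [hmdef]; rw [le_div_iff₀ (by linarith : (0:ℝ) < a - u)] at this
        have := hdom u hu
        nlinarith
      rcases le_or_gt u b with hub | hub
      · -- a ≤ u ≤ b
        have hFuv : F u < F v + ε := hFnear u hua hub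
        have hline : min (hatF a) (hatF b) ≤ m * u + c := by
          rcases le_or_gt 0 m with hm | hm
          · refine le_trans (min_le_left _ _) ?_
            nlinarith
          · refine le_trans (min_le_right _ _) ?_
            nlinarith
        have hmin' : hatF v - ε ≤ min (hatF a) (hatF b) := le_min ha2 hb2
        have hεv : hatF v - F v = 3 * ε := by rw [hεdef]; ring
        linarith
      · -- b < u : hatF u ≤ line
        have hslope := hconc.slope_anti_adjacent hamem hu hab hub
        have : (hatF u - hatF b) / (u - b) ≤ (hatF b - hatF a) / (b - a) :=
          hslope
        rw [hmdef]; rw [div_le_iff₀ (by linarith : (0:ℝ) < u - b)] at this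
        have := hdom u hu
        nlinarith
    -- minimality: hatF below the line
    have hle := hmin (fun u => m * u + c) hlconc hFle
    -- concavity: hatF above the line on [a,b]
    have hge : ∀ u ∈ Set.Icc a b, m * u + c ≤ hatF u := by
      intro u hu
      obtain ⟨hua, hub⟩ := hu
      set p : ℝ := (b - u) / (b - a) with hpdef
      set q : ℝ := (u - a) / (b - a) with hqdef
      have hp : 0 ≤ p := by rw [hpdef]; exact div_nonneg (by linarith) hba.le
      have hq : 0 ≤ q := by rw [hqdef]; exact div_nonneg (by linarith) hba.le
      have hpq : p + q = 1 := by
        rw [hpdef, hqdef, ← add_div, div_eq_one_iff_eq hba.ne']; ring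
      have hcomb := hconc.2 hamem hbmem hp hq hpq
      have hpt : p • a + q • b = u := by
        simp only [smul_eq_mul, hpdef, hqdef]; field_simp; ring
      rw [hpt] at hcomb
      simp only [smul_eq_mul] at hcomb
      have hline : m * u + c = p * hatF a + q * hatF b := by
        rw [← hla, ← hlb, hpdef, hqdef]; field_simp; ring
      linarith
    -- conclude: hatF agrees with the affine map on a neighbourhood of v
    have heqset : ∀ u ∈ Set.Ioo a b, hatF u = m * u + c := fun u hu =>
      le_antisymm (hle u ⟨by have := hu.1; linarith, by have := hu.2; linarith⟩)
        (hge u ⟨hu.1.le, hu.2.le⟩)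
    have hldiff : DifferentiableAt ℝ (fun u : ℝ => m * u + c) v :=
      (differentiableAt_id.const_mul m).add_const c
    have hev : hatF =ᶠ[nhds v] fun u => m * u + c :=
      Filter.eventuallyEq_of_mem (Ioo_mem_nhds hav hvb) heqset
    exact (hldiff.congr_of_eventuallyEq hev).differentiableWithinAt
end
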